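/- Let {Λ_i}_{i∈I} and {Γ_i}_{i∈I} be g-Bessel sequences for Hilbert C*-modules U₁ and U₂ with g-Bessel bounds B₁ and B₂ respectively, where Λ_i and Γ_i map into the same modules V_i. Then the family {Λ_i*Γ_i}_{i∈I} is a g-Bessel sequence for U₂ with respect to U₁, with bound ‖B₁‖B₂. -/

import Mathlib

open scoped InnerProductSpace RightActions

/-- The Hilbert C⋆-module class as it stood in Mathlib of December 2024 (right `A`-action via
`Aᵐᵒᵖ`); Mathlib's `CStarModule` now uses a left action. -/
class CStarModuleOld (A : outParam <| Type*) (E : Type*) [NonUnitalSemiring A] [StarRing A]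
    [Module ℂ A] [AddCommGroup E] [Module ℂ E] [PartialOrder A] [SMul Aᵐᵒᵖ E] [Norm A] [Norm E]
    extends Inner A E where
  inner_add_right {x} {y} {z} : inner x (y + z) = inner x y + inner x z
  inner_self_nonneg {x} : 0 ≤ inner x x
  inner_self {x} : inner x x = 0 ↔ x = 0
  inner_op_smul_right {a : A} {x y : E} : inner x (y <• a) = inner x y * a
  inner_smul_right_complex {z : ℂ} {x} {y} : inner x (z • y) = z • inner x y
  star_inner x y : star (inner x y) = inner y x
  norm_eq_sqrt_norm_inner_self x : ‖x‖ = √‖inner x x‖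

namespace CStarModuleOld

variable {A : Type*} [CStarAlgebra A] [PartialOrder A]
  {E : Type*} [NormedAddCommGroup E] [NormedSpace ℂ E] [SMul Aᵐᵒᵖ E] [CStarModuleOld A E]

theorem inner_sub_right {x y z : E} : ⟪x, y - z⟫_A = ⟪x, y⟫_A - ⟪x, z⟫_A :=
  map_sub (AddMonoidHom.mk' (fun y => ⟪x, y⟫_A) (fun _ _ => CStarModuleOld.inner_add_right)) y z

theorem inner_add_left {x y z : E} : ⟪x + y, z⟫_A = ⟪x, z⟫_A + ⟪y, z⟫_A := by
  rw [← CStarModuleOld.star_inner z (x + y), CStarModuleOld.inner_add_right, star_add,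
    CStarModuleOld.star_inner, CStarModuleOld.star_inner]

theorem inner_sub_left {x y z : E} : ⟪x - y, z⟫_A = ⟪x, z⟫_A - ⟪y, z⟫_A :=
  map_sub (AddMonoidHom.mk' (fun x => ⟪x, z⟫_A) (fun _ _ => CStarModuleOld.inner_add_left)) x y

theorem inner_smul_right_real {r : ℝ} {x y : E} : ⟪x, r • y⟫_A = r • ⟪x, y⟫_A := by
  rw [← Complex.coe_smul r y, CStarModuleOld.inner_smul_right_complex, Complex.coe_smul]

theorem inner_smul_left_real {r : ℝ} {x y : E} : ⟪r • x, y⟫_A = r • ⟪x, y⟫_A := by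
  rw [← CStarModuleOld.star_inner y (r • x), CStarModuleOld.inner_smul_right_real, star_smul,
    star_trivial, CStarModuleOld.star_inner]

theorem isSelfAdjoint_inner_self {x : E} : IsSelfAdjoint ⟪x, x⟫_A :=
  CStarModuleOld.star_inner x x

end CStarModuleOld

open CStarModuleOld in
/-- If `{Λ i}` and `{Γ i}` are g-Bessel sequences for Hilbert
C⋆-modules `U₁` and `U₂` (into the same modules `V i`) with g-Bessel bounds `B₁`, `B₂`,
then `{Λᵢ⋆ Γᵢ}` is a g-Bessel sequence for `U₂` with respect to `U₁`,
with bound `‖B₁‖ B₂`. -/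
theorem gBessel_comp
    {A : Type*} [CStarAlgebra A] [PartialOrder A] [StarOrderedRing A]
    {U₁ : Type*} [NormedAddCommGroup U₁] [NormedSpace ℂ U₁] [SMul Aᵐᵒᵖ U₁] [CStarModuleOld A U₁]
    {U₂ : Type*} [NormedAddCommGroup U₂] [NormedSpace ℂ U₂] [SMul Aᵐᵒᵖ U₂] [CStarModuleOld A U₂]
    {ι : Type*} {V : ι → Type*} [∀ i, NormedAddCommGroup (V i)] [∀ i, NormedSpace ℂ (V i)]
    [∀ i, SMul Aᵐᵒᵖ (V i)] [∀ i, CStarModuleOld A (V i)]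
    (Λ : ∀ i, U₁ →L[ℂ] V i) (Λad : ∀ i, V i →L[ℂ] U₁)
    (hΛadj : ∀ (i) (x : U₁) (v : V i), ⟪Λ i x, v⟫_A = ⟪x, Λad i v⟫_A)
    (Γ : ∀ i, U₂ →L[ℂ] V i) (Γad : ∀ i, V i →L[ℂ] U₂)
    (hΓadj : ∀ (i) (x : U₂) (v : V i), ⟪Γ i x, v⟫_A = ⟪x, Γad i v⟫_A)
    (B₁ B₂ : ℝ) (hB₁ : 0 < B₁) (hB₂ : 0 < B₂)
    (hΛsum : ∀ x : U₁, Summable fun i => ⟪Λ i x, Λ i x⟫_A)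
    (hΛ : ∀ x : U₁, (∑' i, ⟪Λ i x, Λ i x⟫_A) ≤ B₁ • ⟪x, x⟫_A)
    (hΓsum : ∀ x : U₂, Summable fun i => ⟪Γ i x, Γ i x⟫_A)
    (hΓ : ∀ x : U₂, (∑' i, ⟪Γ i x, Γ i x⟫_A) ≤ B₂ • ⟪x, x⟫_A) :
    ∀ x : U₂,
      (Summable fun i => ⟪Λad i (Γ i x), Λad i (Γ i x)⟫_A) ∧
      (∑' i, ⟪Λad i (Γ i x), Λad i (Γ i x)⟫_A) ≤ (‖B₁‖ * B₂) • ⟪x, x⟫_A := by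
  -- each single `Λ i` satisfies the Bessel bound
  have hterm : ∀ (u : U₁) (i : ι), ⟪Λ i u, Λ i u⟫_A ≤ B₁ • ⟪u, u⟫_A := fun u i =>
    le_trans (Summable.le_tsum (hΛsum u) i (fun j _ => inner_self_nonneg)) (hΛ u)
  -- key: the adjoint satisfies the same bound
  have key : ∀ (i : ι) (v : V i), ⟪Λad i v, Λad i v⟫_A ≤ B₁ • ⟪v, v⟫_A := by
    intro i v
    set u := Λad i v with hu
    set a := ⟪u, u⟫_A with ha
    have hΛuv : ⟪Λ i u, v⟫_A = a := by rw [hΛadj]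
    have hvΛu : ⟪v, Λ i u⟫_A = a := by
      rw [← star_inner, hΛuv]
      exact isSelfAdjoint_inner_self
    have h0 : 0 ≤ ⟪Λ i u - B₁ • v, Λ i u - B₁ • v⟫_A := inner_self_nonneg
    rw [CStarModuleOld.inner_sub_left, CStarModuleOld.inner_sub_right, CStarModuleOld.inner_sub_right,
      CStarModuleOld.inner_smul_left_real, CStarModuleOld.inner_smul_right_real, CStarModuleOld.inner_smul_left_real, hΛuv, hvΛu,
      CStarModuleOld.inner_smul_right_real] at h0
    -- h0 : 0 ≤ ⟪Λ i u, Λ i u⟫ - B₁ • a - (B₁ • a - B₁ • B₁ • ⟪v, v⟫)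
    have h1 : B₁ • a ≤ ⟪Λ i u, Λ i u⟫_A - B₁ • a + B₁ • B₁ • ⟪v, v⟫_A := by
      have := sub_nonneg.mp h0
      calc B₁ • a ≤ ⟪Λ i u, Λ i u⟫_A - B₁ • a - (B₁ • a - B₁ • B₁ • ⟪v, v⟫_A) + B₁ • a := by
            simpa using add_le_add_right h0 (B₁ • a)
        _ = ⟪Λ i u, Λ i u⟫_A - B₁ • a + B₁ • B₁ • ⟪v, v⟫_A := by abel
    have h2 : B₁ • a ≤ B₁ • (B₁ • ⟪v, v⟫_A) := by
      calc B₁ • a ≤ ⟪Λ i u, Λ i u⟫_A - B₁ • a + B₁ • B₁ • ⟪v, v⟫_A := h1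
        _ ≤ B₁ • a - B₁ • a + B₁ • B₁ • ⟪v, v⟫_A := by
            gcongr
            exact hterm u i
        _ = B₁ • (B₁ • ⟪v, v⟫_A) := by abel
    exact (smul_le_smul_iff_of_pos_left hB₁).mp h2
  intro x
  -- termwise comparison
  have hle : ∀ i, ⟪Λad i (Γ i x), Λad i (Γ i x)⟫_A ≤ B₁ • ⟪Γ i x, Γ i x⟫_A :=
    fun i => key i (Γ i x)
  have hbsum : Summable fun i => B₁ • ⟪Γ i x, Γ i x⟫_A := (hΓsum x).const_smul B₁
  -- summability by the Cauchy criterion and norm monotonicity on positives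
  have hasum : Summable fun i => ⟪Λad i (Γ i x), Λad i (Γ i x)⟫_A := by
    rw [summable_iff_vanishing]
    intro e he
    obtain ⟨ε, hε, hball⟩ := Metric.mem_nhds_iff.mp he
    obtain ⟨s, hs⟩ := (summable_iff_vanishing.mp hbsum) (Metric.ball 0 ε)
      (Metric.ball_mem_nhds 0 hε)
    refine ⟨s, fun t ht => ?_⟩
    apply hball
    have h₁ : (0 : A) ≤ ∑ i ∈ t, ⟪Λad i (Γ i x), Λad i (Γ i x)⟫_A :=
      Finset.sum_nonneg fun i _ => inner_self_nonneg
    have h₂ : (∑ i ∈ t, ⟪Λad i (Γ i x), Λad i (Γ i x)⟫_A) ≤ ∑ i ∈ t, B₁ • ⟪Γ i x, Γ i x⟫_A :=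
      Finset.sum_le_sum fun i _ => hle i
    have h₃ : ‖∑ i ∈ t, ⟪Λad i (Γ i x), Λad i (Γ i x)⟫_A‖ ≤ ‖∑ i ∈ t, B₁ • ⟪Γ i x, Γ i x⟫_A‖ :=
      CStarAlgebra.norm_le_norm_of_nonneg_of_le h₁ h₂
    have := hs t ht
    simp only [Metric.mem_ball, dist_zero_right] at this ⊢
    exact lt_of_le_of_lt h₃ this
  refine ⟨hasum, ?_⟩
  have hnorm : ‖B₁‖ = B₁ := Real.norm_of_nonneg hB₁.le
  calc (∑' i, ⟪Λad i (Γ i x), Λad i (Γ i x)⟫_A)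
      ≤ ∑' i, B₁ • ⟪Γ i x, Γ i x⟫_A := Summable.tsum_le_tsum hle hasum hbsum
    _ = B₁ • ∑' i, ⟪Γ i x, Γ i x⟫_A := by
        exact Summable.tsum_const_smul B₁ (hΓsum x)
    _ ≤ B₁ • (B₂ • ⟪x, x⟫_A) := smul_le_smul_of_nonneg_left (hΓ x) hB₁.le
    _ = (‖B₁‖ * B₂) • ⟪x, x⟫_A := by rw [hnorm, smul_smul]
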